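/- Let a, b, c, d be affinely independent points of EuclideanSpace ℝ (Fin 3). Then it is not the case that at every vertex v ∈ {a,b,c,d} some two of the three face angles incident to v (the angles ∠ x v y over pairs {x,y} of the other three vertices) sum to more than π. -/

import Mathlib

open EuclideanGeometry Real

/-- It is not possible that at every vertex of a nondegenerate tetrahedron,
some two of the three incident face angles sum to more than `π`. -/
theorem not_all_vertices_fail
    (a b c d : EuclideanSpace ℝ (Fin 3))
    (h : AffineIndependent ℝ ![a, b, c, d]) :
    ¬ ((∠ b a c + ∠ b a d > π ∨ ∠ b a c + ∠ c a d > π ∨ ∠ b a d + ∠ c a d > π) ∧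
       (∠ a b c + ∠ a b d > π ∨ ∠ a b c + ∠ c b d > π ∨ ∠ a b d + ∠ c b d > π) ∧
       (∠ a c b + ∠ a c d > π ∨ ∠ a c b + ∠ b c d > π ∨ ∠ a c d + ∠ b c d > π) ∧
       (∠ a d b + ∠ a d c > π ∨ ∠ a d b + ∠ b d c > π ∨ ∠ a d c + ∠ b d c > π)) := by
  have hinj := h.injective
  have hab : a ≠ b := fun e => absurd (hinj (a₁ := 0) (a₂ := 1) (by simp [e])) (by decide)
  have hac : a ≠ c := fun e => absurd (hinj (a₁ := 0) (a₂ := 2) (by simp [e])) (by decide)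
  have had : a ≠ d := fun e => absurd (hinj (a₁ := 0) (a₂ := 3) (by simp [e])) (by decide)
  have hbc : b ≠ c := fun e => absurd (hinj (a₁ := 1) (a₂ := 2) (by simp [e])) (by decide)
  have hbd : b ≠ d := fun e => absurd (hinj (a₁ := 1) (a₂ := 3) (by simp [e])) (by decide)
  have hcd : c ≠ d := fun e => absurd (hinj (a₁ := 2) (a₂ := 3) (by simp [e])) (by decide)
  -- face angle sums
  have f1 : ∠ a b c + ∠ b c a + ∠ c a b = π :=
    angle_add_angle_add_angle_eq_pi c hab.symm
  have f2 : ∠ a b d + ∠ b d a + ∠ d a b = π :=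
    angle_add_angle_add_angle_eq_pi d hab.symm
  have f3 : ∠ a c d + ∠ c d a + ∠ d a c = π :=
    angle_add_angle_add_angle_eq_pi d hac.symm
  have f4 : ∠ b c d + ∠ c d b + ∠ d b c = π :=
    angle_add_angle_add_angle_eq_pi d hbc.symm
  rw [angle_comm b c a, angle_comm c a b] at f1
  rw [angle_comm b d a, angle_comm d a b] at f2
  rw [angle_comm c d a, angle_comm d a c] at f3
  rw [angle_comm c d b, angle_comm d b c] at f4
  rintro ⟨ha, hb, hc, hd⟩
  have n1 := angle_nonneg b a c
  have n2 := angle_nonneg b a d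
  have n3 := angle_nonneg c a d
  have n4 := angle_nonneg a b c
  have n5 := angle_nonneg a b d
  have n6 := angle_nonneg c b d
  have n7 := angle_nonneg a c b
  have n8 := angle_nonneg a c d
  have n9 := angle_nonneg b c d
  have n10 := angle_nonneg a d b
  have n11 := angle_nonneg a d c
  have n12 := angle_nonneg b d c
  have sa : ∠ b a c + ∠ b a d + ∠ c a d > π := by rcases ha with h | h | h <;> linarith
  have sb : ∠ a b c + ∠ a b d + ∠ c b d > π := by rcases hb with h | h | h <;> linarith
  have sc : ∠ a c b + ∠ a c d + ∠ b c d > π := by rcases hc with h | h | h <;> linarith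
  have sd : ∠ a d b + ∠ a d c + ∠ b d c > π := by rcases hd with h | h | h <;> linarith
  linarith
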